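/- Let K be a finite simple graph and t a positive integer such that 2t divides the degree of every vertex of K. Then there exists a factorisation {F_1, …, F_t} of K such that for every vertex v and every i ∈ {1, …, t}, the degree of v in F_i equals deg_K(v)/t. -/

import Mathlib

open SimpleGraph

open Finset


namespace Fact2t

variable {V : Type*} [DecidableEq V]

/-- degree of `v` in a multiset of edges -/
def mdeg (E : Multiset (Sym2 V)) (v : V) : ℕ := Multiset.countP (fun e => v ∈ e) E

lemma orient_aux (n : ℕ) : ∀ (E : Multiset (Sym2 V)), Multiset.card E = n →
    (∀ e ∈ E, ¬ e.IsDiag) → (∀ v, Even (mdeg E v)) →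
    ∃ A : Multiset (V × V), A.map (fun p => s(p.1, p.2)) = E ∧
      ∀ v, A.countP (fun p => p.1 = v) = A.countP (fun p => p.2 = v) := by
  induction n using Nat.strong_induction_on with
  | _ n ih =>
  intro E hcard hd hev
  rcases Multiset.empty_or_exists_mem E with rfl | ⟨e, he⟩
  · exact ⟨0, by simp, fun v => by simp⟩
  · induction e using Sym2.ind with
    | _ v a =>
    have hva : v ≠ a := fun h => hd _ he (by simp [h])
    -- find a second edge at v
    have h1 : mdeg E v ≥ 1 := by
      rw [mdeg, ← Multiset.cons_erase he, Multiset.countP_cons]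
      simp
    have h2 : mdeg E v ≥ 2 := by
      rcases hev v with ⟨k, hk⟩
      omega
    have h1' : 0 < mdeg (E.erase s(v,a)) v := by
      have := Multiset.cons_erase he
      rw [mdeg] at h2 ⊢
      rw [← this, Multiset.countP_cons] at h2
      simp only [Sym2.mem_iff, true_or, if_true] at h2 ⊢
      omega
    rw [mdeg, Multiset.countP_pos] at h1'
    obtain ⟨f, hf, hvf⟩ := h1'
    obtain ⟨b, rfl⟩ := Sym2.mem_iff_exists.mp hvf
    have hvb : v ≠ b := fun h => hd _ (Multiset.mem_of_mem_erase hf) (by simp [h])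
    set E₂ := (E.erase s(v,a)).erase s(v,b) with hE₂
    have hEeq : E = s(v,a) ::ₘ s(v,b) ::ₘ E₂ := by
      rw [hE₂, Multiset.cons_erase hf, Multiset.cons_erase he]
    have hd₂ : ∀ e ∈ E₂, ¬ e.IsDiag := fun e heE =>
      hd e (by rw [hEeq]; exact Multiset.mem_cons_of_mem (Multiset.mem_cons_of_mem heE))
    by_cases hab : b = a
    · -- double edge: remove both, orient oppositely
      subst hab
      have hev₂ : ∀ u, Even (mdeg E₂ u) := by
        intro u
        have := hev u
        rw [hEeq, mdeg, Multiset.countP_cons, Multiset.countP_cons] at this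
        rcases this with ⟨k, hk⟩
        refine ⟨(mdeg E₂ u)/2, ?_⟩
        simp only [mdeg] at hk ⊢
        split_ifs at hk <;> omega
      obtain ⟨A₂, hA₂map, hA₂bal⟩ := ih (Multiset.card E₂) (by
          rw [hEeq] at hcard; simp at hcard; omega) E₂ rfl hd₂ hev₂
      refine ⟨(v, b) ::ₘ (b, v) ::ₘ A₂, ?_, ?_⟩
      · rw [Multiset.map_cons, Multiset.map_cons, hA₂map, hEeq]
        congr 1
        rw [Sym2.eq_swap]
      · intro u
        rw [Multiset.countP_cons, Multiset.countP_cons, Multiset.countP_cons,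
          Multiset.countP_cons]
        have := hA₂bal u
        split_ifs <;> omega
    · -- shortcut: replace s(v,a), s(v,b) by s(a,b)
      set E₃ : Multiset (Sym2 V) := s(a,b) ::ₘ E₂ with hE₃
      have hd₃ : ∀ e ∈ E₃, ¬ e.IsDiag := by
        intro e heE
        rcases Multiset.mem_cons.mp heE with rfl | h
        · simp [Sym2.isDiag_iff_proj_eq]; exact fun h => hab h.symm
        · exact hd₂ e h
      have hab' : a ≠ b := fun h => hab h.symm
      have hev₃ : ∀ u, Even (mdeg E₃ u) := by
        intro u
        have hu := hev u
        rw [Nat.even_iff] at hu ⊢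
        rw [hEeq] at hu
        simp only [mdeg, Multiset.countP_cons] at hu
        simp only [mdeg, hE₃, Multiset.countP_cons]
        have key : ((if u ∈ s(v,a) then 1 else 0) + (if u ∈ s(v,b) then 1 else 0)) % 2
            = (if u ∈ s(a,b) then 1 else 0) % 2 := by
          by_cases h1 : u = v <;> by_cases h2 : u = a <;> by_cases h3 : u = b
          · exact absurd (h1.symm.trans h2) hva
          · exact absurd (h1.symm.trans h2) hva
          · exact absurd (h1.symm.trans h3) hvb
          · simp [Sym2.mem_iff, h1, h2, h3, hva, hvb, hab', Ne.symm hva, Ne.symm hvb, Ne.symm hab']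
          · exact absurd (h2.symm.trans h3) hab'
          · simp [Sym2.mem_iff, h1, h2, h3, hva, hvb, hab', Ne.symm hva, Ne.symm hvb, Ne.symm hab']
          · simp [Sym2.mem_iff, h1, h2, h3, hva, hvb, hab', Ne.symm hva, Ne.symm hvb, Ne.symm hab']
          · simp [Sym2.mem_iff, h1, h2, h3, hva, hvb, hab', Ne.symm hva, Ne.symm hvb, Ne.symm hab']
        omega
      obtain ⟨A₃, hA₃map, hA₃bal⟩ := ih (Multiset.card E₃) (by
          rw [hEeq] at hcard; simp at hcard; rw [hE₃]; simp; omega) E₃ rfl hd₃ hev₃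
      -- find the arc corresponding to s(a,b)
      have hab3 : s(a,b) ∈ A₃.map (fun p => s(p.1, p.2)) := by
        rw [hA₃map, hE₃]; exact Multiset.mem_cons_self _ _
      rw [Multiset.mem_map] at hab3
      obtain ⟨p, hp, hpeq⟩ := hab3
      obtain ⟨A₄, hA₄⟩ : ∃ A₄, A₃ = p ::ₘ A₄ := ⟨A₃.erase p, (Multiset.cons_erase hp).symm⟩
      have hmap₄ : A₄.map (fun p => s(p.1, p.2)) = E₂ := by
        have : A₃.map (fun p => s(p.1, p.2)) = s(a,b) ::ₘ E₂ := by rw [hA₃map, hE₃]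
        rw [hA₄, Multiset.map_cons, hpeq] at this
        exact (Multiset.cons_inj_right _).mp this
      rw [Sym2.eq_iff] at hpeq
      rcases hpeq with ⟨h1', h2'⟩ | ⟨h1', h2'⟩
      · -- p = (a, b) : replace by (a,v),(v,b)
        refine ⟨(a, v) ::ₘ (v, b) ::ₘ A₄, ?_, ?_⟩
        · rw [Multiset.map_cons, Multiset.map_cons, hmap₄, hEeq]
          have : s(a, v) = s(v, a) := Sym2.eq_swap
          rw [this]
        · intro u
          have hb := hA₃bal u
          rw [hA₄, Multiset.countP_cons, Multiset.countP_cons] at hb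
          rw [Multiset.countP_cons, Multiset.countP_cons, Multiset.countP_cons,
            Multiset.countP_cons]
          rw [h1', h2'] at hb
          split_ifs at hb ⊢ <;> omega
      · -- p = (b, a) : replace by (b,v),(v,a)
        refine ⟨(b, v) ::ₘ (v, a) ::ₘ A₄, ?_, ?_⟩
        · rw [Multiset.map_cons, Multiset.map_cons, hmap₄, hEeq]
          have h3 : s(b, v) = s(v, b) := Sym2.eq_swap
          rw [h3]
          exact Multiset.cons_swap _ _ _
        · intro u
          have hb := hA₃bal u
          rw [hA₄, Multiset.countP_cons, Multiset.countP_cons] at hb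
          rw [Multiset.countP_cons, Multiset.countP_cons, Multiset.countP_cons,
            Multiset.countP_cons]
          rw [h1', h2'] at hb
          split_ifs at hb ⊢ <;> omega

end Fact2t


namespace Fact2t

variable {V : Type*} [Fintype V] [DecidableEq V]

def outd (A : Finset (V × V)) (v : V) : ℕ := (A.filter (fun p => p.1 = v)).card
def ind (A : Finset (V × V)) (v : V) : ℕ := (A.filter (fun p => p.2 = v)).card

lemma sum_outd (A : Finset (V × V)) : ∑ v, outd A v = A.card :=
  (Finset.card_eq_sum_card_fiberwise (fun p _ => Finset.mem_univ p.1)).symm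

lemma sum_ind (A : Finset (V × V)) : ∑ v, ind A v = A.card :=
  (Finset.card_eq_sum_card_fiberwise (fun p _ => Finset.mem_univ p.2)).symm

lemma card_slots (d : V → ℕ) (W : Finset V) :
    ((univ : Finset (Σ v : V, Fin (d v))).filter (fun sl => sl.1 ∈ W)).card = ∑ v ∈ W, d v := by
  have : ((univ : Finset (Σ v : V, Fin (d v))).filter (fun sl => sl.1 ∈ W))
      = W.sigma (fun v => (univ : Finset (Fin (d v)))) := by
    ext ⟨v, i⟩
    simp
  rw [this, Finset.card_sigma]
  simp

lemma card_attach_filter (A : Finset (V × V)) (P : V × V → Prop) [DecidablePred P] :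
    (A.attach.filter (fun e => P e.1)).card = (A.filter P).card := by
  refine Finset.card_bij (fun e _ => e.1) ?_ ?_ ?_
  · intro e he
    simp only [Finset.mem_filter, Finset.mem_attach, true_and] at he
    exact Finset.mem_filter.mpr ⟨e.2, he⟩
  · intro a ha b hb h
    exact Subtype.ext h
  · intro p hp
    simp only [Finset.mem_filter] at hp
    exact ⟨⟨p, hp.1⟩, by simp [hp.2], rfl⟩

lemma filtered_card (A : Finset (V × V)) (W : Finset V) :
    (A.filter (fun p => p.1 ∈ W)).card = ∑ v ∈ W, outd A v := by
  have hfib := Finset.card_eq_sum_card_fiberwise (s := A.filter (fun p => p.1 ∈ W))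
    (t := W) (f := fun p => p.1) (fun p hp => (Finset.mem_filter.mp hp).2)
  rw [hfib]
  refine Finset.sum_congr rfl (fun v hv => ?_)
  rw [Finset.filter_filter]
  refine congrArg Finset.card (Finset.filter_congr ?_)
  intro p _
  constructor
  · exact fun h => h.2
  · exact fun h => ⟨by rw [h]; exact hv, h⟩

lemma filtered_card_snd (A : Finset (V × V)) (W : Finset V) :
    (A.filter (fun p => p.2 ∈ W)).card = ∑ v ∈ W, ind A v := by
  have hfib := Finset.card_eq_sum_card_fiberwise (s := A.filter (fun p => p.2 ∈ W))
    (t := W) (f := fun p => p.2) (fun p hp => (Finset.mem_filter.mp hp).2)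
  rw [hfib]
  refine Finset.sum_congr rfl (fun v hv => ?_)
  rw [Finset.filter_filter]
  refine congrArg Finset.card (Finset.filter_congr ?_)
  intro p _
  constructor
  · exact fun h => h.2
  · exact fun h => ⟨by rw [h]; exact hv, h⟩

lemma extract (A : Finset (V × V)) (t : ℕ) (ht : 0 < t)
    (hout : ∀ v, t ∣ outd A v) (hin : ∀ v, t ∣ ind A v) :
    ∃ B ⊆ A, (∀ v, outd B v = outd A v / t) ∧ (∀ v, ind B v = ind A v / t) := by
  classical
  set ρ : V → ℕ := fun v => outd A v / t with hρ
  set γ : V → ℕ := fun v => ind A v / t with hγ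
  have hρt : ∀ v, t * ρ v = outd A v := fun v => Nat.mul_div_cancel' (hout v)
  have hγt : ∀ v, t * γ v = ind A v := fun v => Nat.mul_div_cancel' (hin v)
  have hsum : ∑ v, ρ v = ∑ v, γ v := by
    have h1 : t * ∑ v, ρ v = t * ∑ v, γ v := by
      rw [Finset.mul_sum, Finset.mul_sum]
      simp only [hρt, hγt]
      rw [sum_outd, sum_ind]
    exact Nat.eq_of_mul_eq_mul_left ht h1
  -- the Hall gadget
  set f : (Σ v : V, Fin (ρ v)) ⊕ {e : V × V // e ∈ A} →
      Finset ({e : V × V // e ∈ A} ⊕ (Σ v : V, Fin (γ v))) :=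
    fun x => match x with
    | .inl sl => (A.attach.filter (fun e => e.1.1 = sl.1)).map
        ⟨Sum.inl, Sum.inl_injective⟩
    | .inr e => insert (Sum.inl e)
        (((univ : Finset (Σ v : V, Fin (γ v))).filter (fun sl => sl.1 = e.1.2)).map
          ⟨Sum.inr, Sum.inr_injective⟩)
    with hf
  have hall : ∀ S : Finset ((Σ v : V, Fin (ρ v)) ⊕ {e : V × V // e ∈ A}), S.card ≤ (S.biUnion f).card := by
    intro S
    set V₁ := S.toLeft.image (fun sl => sl.1) with hV₁
    set X := S.toRight with hX
    set O := A.attach.filter (fun e => e.1.1 ∈ V₁) with hO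
    set T := X.image (fun e => e.1.2) with hT
    -- upper bound on S.card
    have l1 : S.card ≤ (∑ v ∈ V₁, ρ v) + X.card := by
      rw [← Finset.card_toLeft_add_card_toRight (u := S)]
      have : S.toLeft ⊆ (univ : Finset (Σ v : V, Fin (ρ v))).filter (fun sl => sl.1 ∈ V₁) := by
        intro sl hsl
        simp only [Finset.mem_filter, Finset.mem_univ, true_and, hV₁]
        exact Finset.mem_image_of_mem _ hsl
      have h2 := Finset.card_le_card this
      rw [card_slots] at h2
      rw [hX]
      omega
    have l2 : O.card = t * ∑ v ∈ V₁, ρ v := by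
      have h1 : O.card = (A.filter (fun p => p.1 ∈ V₁)).card := by
        rw [hO]; exact card_attach_filter A (fun p => p.1 ∈ V₁)
      rw [h1, filtered_card, Finset.mul_sum]
      exact Finset.sum_congr rfl (fun v _ => (hρt v).symm)
    have l3 : X.card ≤ t * ∑ u ∈ T, γ u := by
      have hXsub : X ⊆ A.attach.filter (fun e => e.1.2 ∈ T) := by
        intro e he
        simp only [Finset.mem_filter, Finset.mem_attach, true_and, hT]
        exact Finset.mem_image_of_mem _ he
      have h1 := Finset.card_le_card hXsub
      have heq : (A.attach.filter (fun e => e.1.2 ∈ T)).card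
          = (A.filter (fun p => p.2 ∈ T)).card := card_attach_filter A (fun p => p.2 ∈ T)
      have heq2 := filtered_card_snd A T
      have h2 : ∑ u ∈ T, ind A u = t * ∑ u ∈ T, γ u := by
        rw [Finset.mul_sum]
        exact Finset.sum_congr rfl (fun u _ => (hγt u).symm)
      omega
    -- lower bound on the neighbourhood
    have part1 : (O ∪ X).map ⟨Sum.inl, Sum.inl_injective⟩ ⊆ S.biUnion f := by
      intro x hx
      rw [Finset.mem_map] at hx
      obtain ⟨e, he, rfl⟩ := hx
      rw [Finset.mem_union] at he
      rcases he with he | he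
      · rw [hO, Finset.mem_filter] at he
        obtain ⟨-, he2⟩ := he
        rw [hV₁, Finset.mem_image] at he2
        obtain ⟨sl, hsl, hsleq⟩ := he2
        refine Finset.mem_biUnion.mpr ⟨Sum.inl sl, Finset.mem_toLeft.mp hsl, ?_⟩
        simp only [hf]
        rw [Finset.mem_map]
        exact ⟨e, Finset.mem_filter.mpr ⟨Finset.mem_attach _ _, by rw [hsleq]⟩, rfl⟩
      · refine Finset.mem_biUnion.mpr ⟨Sum.inr e, Finset.mem_toRight.mp he, ?_⟩
        simp [hf]
    have part2 : ((univ : Finset (Σ v : V, Fin (γ v))).filter (fun sl => sl.1 ∈ T)).map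
        ⟨Sum.inr, Sum.inr_injective⟩ ⊆ S.biUnion f := by
      intro x hx
      rw [Finset.mem_map] at hx
      obtain ⟨sl, hsl, rfl⟩ := hx
      rw [Finset.mem_filter] at hsl
      obtain ⟨-, hslT⟩ := hsl
      rw [hT, Finset.mem_image] at hslT
      obtain ⟨e, heX, heeq⟩ := hslT
      refine Finset.mem_biUnion.mpr ⟨Sum.inr e, Finset.mem_toRight.mp heX, ?_⟩
      simp only [hf]
      refine Finset.mem_insert_of_mem ?_
      rw [Finset.mem_map]
      exact ⟨sl, Finset.mem_filter.mpr ⟨Finset.mem_univ _, heeq.symm⟩, rfl⟩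
    have ldisj : Disjoint ((O ∪ X).map ⟨Sum.inl, Sum.inl_injective⟩)
        (((univ : Finset (Σ v : V, Fin (γ v))).filter (fun sl => sl.1 ∈ T)).map
          ⟨Sum.inr, Sum.inr_injective⟩) := by
      rw [Finset.disjoint_left]
      intro x hx hx'
      rw [Finset.mem_map] at hx hx'
      obtain ⟨e, -, rfl⟩ := hx
      obtain ⟨sl, -, h⟩ := hx'
      exact absurd h (by simp)
    have l4 : (O ∪ X).card + ∑ u ∈ T, γ u ≤ (S.biUnion f).card := by
      have := Finset.card_le_card (Finset.union_subset part1 part2)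
      rw [Finset.card_union_of_disjoint ldisj, Finset.card_map, Finset.card_map,
        card_slots] at this
      exact this
    have l5 : (O ∪ X).card + (O ∩ X).card = O.card + X.card :=
      Finset.card_union_add_card_inter O X
    have m1 : (O ∩ X).card ≤ O.card := Finset.card_le_card (Finset.inter_subset_left)
    have m2 : (O ∩ X).card ≤ X.card := Finset.card_le_card (Finset.inter_subset_right)
    -- arithmetic
    set P := ∑ v ∈ V₁, ρ v
    set Q := ∑ u ∈ T, γ u
    obtain ⟨t', rfl⟩ : ∃ t', t = t' + 1 := ⟨t - 1, by omega⟩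
    have e1 : (t' + 1) * P = t' * P + P := by ring
    have e2 : (t' + 1) * Q = t' * Q + Q := by ring
    rcases le_total P Q with hPQ | hPQ
    · have : t' * P ≤ t' * Q := Nat.mul_le_mul_left _ hPQ
      omega
    · have : t' * Q ≤ t' * P := Nat.mul_le_mul_left _ hPQ
      omega
  obtain ⟨g, hginj, hgf⟩ := (Finset.all_card_le_biUnion_card_iff_exists_injective f).mp hall
  have hcard : Fintype.card ((Σ v : V, Fin (ρ v)) ⊕ {e : V × V // e ∈ A})
      = Fintype.card ({e : V × V // e ∈ A} ⊕ (Σ v : V, Fin (γ v))) := by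
    simp only [Fintype.card_sum, Fintype.card_sigma, Fintype.card_fin, Fintype.card_coe]
    omega
  have hgbij : Function.Bijective g :=
    (Fintype.bijective_iff_injective_and_card g).mpr ⟨hginj, hcard⟩
  -- extract the chosen arcs
  have hgl : ∀ sl : Σ v : V, Fin (ρ v), ∃ e : {e : V × V // e ∈ A},
      g (Sum.inl sl) = Sum.inl e ∧ e.1.1 = sl.1 := by
    intro sl
    have h := hgf (Sum.inl sl)
    simp only [hf] at h
    rw [Finset.mem_map] at h
    obtain ⟨e, he, heq⟩ := h
    rw [Finset.mem_filter] at he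
    exact ⟨e, heq.symm, he.2⟩
  choose F hF1 hF2 using hgl
  set chosen := A.attach.filter
    (fun e => ∃ sl : Σ v : V, Fin (ρ v), g (Sum.inl sl) = Sum.inl e) with hchosen
  set B := chosen.map (Function.Embedding.subtype _) with hB
  have hBA : B ⊆ A := by
    intro p hp
    rw [hB, Finset.mem_map] at hp
    obtain ⟨e, -, rfl⟩ := hp
    exact e.2
  have houtB : ∀ v, outd B v = ρ v := by
    intro v
    have hcard2 : (B.filter (fun p => p.1 = v)).card
        = (chosen.filter (fun e => e.1.1 = v)).card := by
      rw [hB, Finset.filter_map]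
      rw [Finset.card_map]
      rfl
    rw [outd, hcard2]
    have : (chosen.filter (fun e => e.1.1 = v)).card
        = ((univ : Finset (Σ u : V, Fin (ρ u))).filter (fun sl => sl.1 = v)).card := by
      refine (Finset.card_bij (fun sl _ => F sl) ?_ ?_ ?_).symm
      · intro sl hsl
        rw [Finset.mem_filter] at hsl ⊢
        refine ⟨Finset.mem_filter.mpr ⟨Finset.mem_attach _ _, ⟨sl, hF1 sl⟩⟩, ?_⟩
        rw [hF2 sl, hsl.2]
      · intro sl1 h1 sl2 h2 heq
        have hgg : g (Sum.inl sl1) = g (Sum.inl sl2) := by rw [hF1 sl1, hF1 sl2, heq]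
        exact Sum.inl_injective (hginj hgg)
      · intro e he
        rw [Finset.mem_filter] at he
        obtain ⟨he1, he2⟩ := he
        rw [hchosen, Finset.mem_filter] at he1
        obtain ⟨-, sl, hsl⟩ := he1
        have heF : F sl = e := Sum.inl_injective ((hF1 sl).symm.trans hsl)
        refine ⟨sl, ?_, heF⟩
        rw [Finset.mem_filter]
        exact ⟨Finset.mem_univ _, by rw [← hF2 sl, heF, he2]⟩
    rw [this]
    have := card_slots ρ {v}
    rw [Finset.sum_singleton] at this
    rw [← this]
    congr 1
    ext sl
    simp
  -- in-degrees
  have hgr : ∀ sl : Σ u : V, Fin (γ u), ∃ e : {e : V × V // e ∈ A},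
      g (Sum.inr e) = Sum.inr sl ∧ e.1.2 = sl.1 ∧ e ∈ chosen := by
    intro sl
    obtain ⟨x, hx⟩ := hgbij.2 (Sum.inr sl)
    rcases x with sl' | e
    · exact absurd ((hF1 sl').symm.trans hx) (by simp)
    · have hmem := hgf (Sum.inr e)
      rw [hx] at hmem
      simp only [hf] at hmem
      rw [Finset.mem_insert] at hmem
      rcases hmem with h | h
      · exact absurd h (by simp)
      · rw [Finset.mem_map] at h
        obtain ⟨sl'', hsl'', heq⟩ := h
        have : sl'' = sl := Sum.inr_injective heq
        subst this
        rw [Finset.mem_filter] at hsl''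
        refine ⟨e, hx, hsl''.2.symm, ?_⟩
        -- e is chosen
        obtain ⟨y, hy⟩ := hgbij.2 (Sum.inl e)
        rcases y with sl₀ | e₀
        · rw [hchosen, Finset.mem_filter]
          exact ⟨Finset.mem_attach _ _, sl₀, hy⟩
        · have hmem₀ := hgf (Sum.inr e₀)
          rw [hy] at hmem₀
          simp only [hf] at hmem₀
          rw [Finset.mem_insert] at hmem₀
          rcases hmem₀ with h₀ | h₀
          · have : e₀ = e := Sum.inl_injective h₀.symm
            subst this
            rw [hy] at hx
            exact absurd hx (by simp)
          · rw [Finset.mem_map] at h₀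
            obtain ⟨sl₁, -, habs⟩ := h₀
            exact absurd habs (by simp)
  choose G hG1 hG2 hG3 using hgr
  have hindB_ge : ∀ u, γ u ≤ ind B u := by
    intro u
    have hcard2 : (B.filter (fun p => p.2 = u)).card
        = (chosen.filter (fun e => e.1.2 = u)).card := by
      rw [hB, Finset.filter_map, Finset.card_map]
      rfl
    rw [ind, hcard2]
    have hslc := card_slots γ {u}
    rw [Finset.sum_singleton] at hslc
    have : ((univ : Finset (Σ v : V, Fin (γ v))).filter (fun sl => sl.1 ∈ ({u} : Finset V))).card
        ≤ (chosen.filter (fun e => e.1.2 = u)).card := by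
      refine Finset.card_le_card_of_injOn (fun sl => G sl) ?_ ?_
      · intro sl hsl
        rw [Finset.mem_coe, Finset.mem_filter, Finset.mem_singleton] at hsl
        rw [Finset.mem_coe, Finset.mem_filter]
        exact ⟨hG3 sl, by rw [hG2 sl, hsl.2]⟩
      · intro sl1 h1 sl2 h2 heq
        simp only at heq
        have hgg : Sum.inr (β := (Σ v : V, Fin (γ v))) sl1 = Sum.inr sl2 :=
          (hG1 sl1).symm.trans (by rw [heq, hG1 sl2])
        exact Sum.inr_injective hgg
    omega
  have hsumB : ∑ u, ind B u = ∑ u, γ u := by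
    rw [sum_ind]
    have h1 : ∑ v, outd B v = ∑ v, ρ v := Finset.sum_congr rfl (fun v _ => houtB v)
    rw [sum_outd] at h1
    rw [h1]
    exact hsum
  have hindB : ∀ u, ind B u = γ u := by
    intro u
    by_contra hne
    have hlt : γ u < ind B u := lt_of_le_of_ne (hindB_ge u) (fun h => hne h.symm)
    have : ∑ u, γ u < ∑ u, ind B u :=
      Finset.sum_lt_sum (fun i _ => hindB_ge i) ⟨u, Finset.mem_univ u, hlt⟩
    omega
  exact ⟨B, hBA, houtB, hindB⟩

end Fact2t

namespace Fact2t

variable {V : Type*} [Fintype V] [DecidableEq V]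

lemma decomp (t : ℕ) (ht : 0 < t) : ∀ (A : Finset (V × V)),
    (∀ v, t ∣ outd A v) → (∀ v, t ∣ ind A v) →
    ∃ C : Fin t → Finset (V × V),
      (∀ i, C i ⊆ A) ∧ (∀ p ∈ A, ∃! i, p ∈ C i) ∧
      (∀ i v, outd (C i) v = outd A v / t) ∧ (∀ i v, ind (C i) v = ind A v / t) := by
  induction t with
  | zero => omega
  | succ k ihk =>
    intro A hout hin
    rcases Nat.eq_zero_or_pos k with rfl | hk
    · refine ⟨fun _ => A, fun _ => Finset.Subset.refl A, ?_, ?_, ?_⟩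
      · intro p hp
        exact ⟨0, hp, fun j _ => Subsingleton.elim (α := Fin 1) j 0⟩
      · intro i v; simp
      · intro i v; simp
    · obtain ⟨B, hBA, hBout, hBin⟩ := extract A (k+1) (by omega) hout hin
      set A' := A \ B with hA'
      have hA'sub : A' ⊆ A := Finset.sdiff_subset
      have houtA' : ∀ v, outd A' v = outd A v - outd A v / (k+1) := by
        intro v
        have hco : (A \ B).filter (fun p => p.1 = v)
            = A.filter (fun p => p.1 = v) \ B.filter (fun p => p.1 = v) := by
          ext p; simp only [Finset.mem_sdiff, Finset.mem_filter]; tauto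
        rw [hA', outd, hco, Finset.card_sdiff_of_subset (Finset.filter_subset_filter _ hBA)]
        rw [← hBout v]
        rfl
      have hindA' : ∀ v, ind A' v = ind A v - ind A v / (k+1) := by
        intro v
        have hco : (A \ B).filter (fun p => p.2 = v)
            = A.filter (fun p => p.2 = v) \ B.filter (fun p => p.2 = v) := by
          ext p; simp only [Finset.mem_sdiff, Finset.mem_filter]; tauto
        rw [hA', ind, hco, Finset.card_sdiff_of_subset (Finset.filter_subset_filter _ hBA)]
        rw [← hBin v]
        rfl
      have houtm : ∀ v, outd A' v = k * (outd A v / (k+1)) := by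
        intro v
        have h1 : (k+1) * (outd A v / (k+1)) = outd A v := Nat.mul_div_cancel' (hout v)
        have h2 : (k+1) * (outd A v / (k+1)) = k * (outd A v / (k+1)) + (outd A v / (k+1)) := by
          ring
        rw [houtA' v]; omega
      have hindm : ∀ v, ind A' v = k * (ind A v / (k+1)) := by
        intro v
        have h1 : (k+1) * (ind A v / (k+1)) = ind A v := Nat.mul_div_cancel' (hin v)
        have h2 : (k+1) * (ind A v / (k+1)) = k * (ind A v / (k+1)) + (ind A v / (k+1)) := by
          ring
        rw [hindA' v]; omega
      obtain ⟨C', hC'sub, hC'part, hC'out, hC'in⟩ := ihk hk A'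
        (fun v => ⟨_, houtm v⟩) (fun v => ⟨_, hindm v⟩)
      refine ⟨Fin.cons B C', ?_, ?_, ?_, ?_⟩
      · intro i
        refine Fin.cases ?_ ?_ i
        · simp only [Fin.cons_zero]; exact hBA
        · intro j; simp only [Fin.cons_succ]; exact (hC'sub j).trans hA'sub
      · intro p hp
        by_cases hpB : p ∈ B
        · refine ⟨0, by simpa only [Fin.cons_zero], ?_⟩
          intro j
          refine Fin.cases ?_ ?_ j
          · intro _; rfl
          · intro i hji
            simp only [Fin.cons_succ] at hji
            exact absurd (hC'sub i hji) (by simp [hA', hpB])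
        · have hpA' : p ∈ A' := by simp [hA', hp, hpB]
          obtain ⟨i, hi, hiu⟩ := hC'part p hpA'
          refine ⟨i.succ, by simpa only [Fin.cons_succ], ?_⟩
          intro j
          refine Fin.cases ?_ ?_ j
          · intro hj0
            simp only [Fin.cons_zero] at hj0
            exact absurd hj0 hpB
          · intro i' hji
            simp only [Fin.cons_succ] at hji
            exact congrArg Fin.succ (hiu i' hji)
      · intro i v
        refine Fin.cases ?_ ?_ i
        · simp only [Fin.cons_zero]; exact hBout v
        · intro j
          simp only [Fin.cons_succ]
          rw [hC'out j v, houtm v]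
          have h1 : (k+1) * (outd A v / (k+1)) = outd A v := Nat.mul_div_cancel' (hout v)
          rw [Nat.mul_div_cancel_left _ hk]
      · intro i v
        refine Fin.cases ?_ ?_ i
        · simp only [Fin.cons_zero]; exact hBin v
        · intro j
          simp only [Fin.cons_succ]
          rw [hC'in j v, hindm v]
          have h1 : (k+1) * (ind A v / (k+1)) = ind A v := Nat.mul_div_cancel' (hin v)
          rw [Nat.mul_div_cancel_left _ hk]

end Fact2t


namespace Fact2t

variable {V : Type*} [DecidableEq V]

lemma countP_split (A : Multiset (V × V)) (h : ∀ p ∈ A, p.1 ≠ p.2) (v : V) :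
    A.countP (fun p => p.1 = v) + A.countP (fun p => p.2 = v)
      = (A.map (fun p => s(p.1, p.2))).countP (fun e => v ∈ e) := by
  induction A using Multiset.induction with
  | empty => simp
  | cons p A ih =>
    have hp := h p (Multiset.mem_cons_self p A)
    have ih' := ih (fun q hq => h q (Multiset.mem_cons_of_mem hq))
    simp only [Multiset.map_cons, Multiset.countP_cons]
    have hmem : (v ∈ s(p.1, p.2)) ↔ (p.1 = v ∨ p.2 = v) := by
      rw [Sym2.mem_iff]
      exact or_congr eq_comm eq_comm
    have hne : ¬(p.1 = v ∧ p.2 = v) := fun h => hp (h.1.trans h.2.symm)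
    simp only [hmem]
    split_ifs <;> first | omega | tauto

variable [Fintype V]

lemma incidence_count (K : SimpleGraph V) [DecidableRel K.Adj] (v : V) :
    Multiset.countP (fun e => v ∈ e) K.edgeFinset.val = K.degree v := by
  have h1 : K.edgeFinset.filter (fun e => v ∈ e) = K.incidenceFinset v := by
    ext e
    simp only [Finset.mem_filter, SimpleGraph.mem_incidenceFinset, SimpleGraph.mem_edgeFinset,
      SimpleGraph.incidenceSet]
    constructor
    · rintro ⟨h1, h2⟩; exact ⟨h1, h2⟩
    · rintro ⟨h1, h2⟩; exact ⟨h1, h2⟩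
  have h2 : (K.edgeFinset.filter (fun e => v ∈ e)).card
      = Multiset.countP (fun e => v ∈ e) K.edgeFinset.val :=
    (Multiset.countP_eq_card_filter _ _).symm
  rw [← h2, h1, SimpleGraph.card_incidenceFinset_eq_degree]

end Fact2t

open Fact2t

theorem factorisation_of_graph_with_degrees_divisible_by_two_t
    {V : Type*} [Fintype V] [DecidableEq V] (K : SimpleGraph V) [DecidableRel K.Adj]
    (t : ℕ) (ht : 0 < t) (hdvd : ∀ v, 2 * t ∣ K.degree v) :
    ∃ F : Fin t → SimpleGraph V,
      (∀ i, F i ≤ K) ∧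
      (∀ e ∈ K.edgeSet, ∃! i, e ∈ (F i).edgeSet) ∧
      (∀ i v, ((F i).neighborSet v).ncard = K.degree v / t) := by
  classical
  set E : Multiset (Sym2 V) := K.edgeFinset.val with hE
  have hEnd : ∀ e ∈ E, ¬ e.IsDiag := by
    intro e he
    exact K.not_isDiag_of_mem_edgeSet (SimpleGraph.mem_edgeFinset.mp he)
  have hmdeg : ∀ v, Multiset.countP (fun e => v ∈ e) E = K.degree v :=
    fun v => incidence_count K v
  have hev : ∀ v, Even (mdeg E v) := by
    intro v
    simp only [mdeg]
    rw [hmdeg v]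
    obtain ⟨s, hs⟩ := hdvd v
    exact ⟨t * s, by rw [hs]; ring⟩
  obtain ⟨A, hAmap, hAbal⟩ := orient_aux (Multiset.card E) E rfl hEnd hev
  have hmapnodup : (A.map (fun p => s(p.1, p.2))).Nodup := by
    rw [hAmap, hE]; exact K.edgeFinset.nodup
  have hAnodup : A.Nodup := Multiset.Nodup.of_map _ hmapnodup
  have hAinj : ∀ p ∈ A, ∀ q ∈ A, s(p.1, p.2) = s(q.1, q.2) → p = q :=
    Multiset.inj_on_of_nodup_map hmapnodup
  have hAnd : ∀ p ∈ A, p.1 ≠ p.2 := by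
    intro p hp
    have : s(p.1, p.2) ∈ E := hAmap ▸ Multiset.mem_map_of_mem _ hp
    intro h
    exact hEnd _ this (by simpa [Sym2.isDiag_iff_proj_eq] using h)
  set Af : Finset (V × V) := ⟨A, hAnodup⟩ with hAf
  have houtd : ∀ v, outd Af v = Multiset.countP (fun p => p.1 = v) A :=
    fun v => (Multiset.countP_eq_card_filter _ _).symm
  have hindd : ∀ v, ind Af v = Multiset.countP (fun p => p.2 = v) A :=
    fun v => (Multiset.countP_eq_card_filter _ _).symm
  -- degrees
  have hdeg2 : ∀ v, outd Af v + ind Af v = K.degree v := by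
    intro v
    rw [houtd v, hindd v, countP_split A hAnd v, hAmap, hmdeg v]
  have hbal : ∀ v, outd Af v = ind Af v := by
    intro v
    rw [houtd v, hindd v]
    exact hAbal v
  -- divisibility
  have houtdvd : ∀ v, t ∣ outd Af v := by
    intro v
    obtain ⟨s, hs⟩ := hdvd v
    have h1 := hdeg2 v
    have h2 := hbal v
    refine ⟨s, ?_⟩
    have : 2 * (t * s) = 2 * t * s := by ring
    omega
  have hinddvd : ∀ v, t ∣ ind Af v := fun v => (hbal v) ▸ houtdvd v
  obtain ⟨C, hCsub, hCpart, hCout, hCin⟩ := decomp t ht Af houtdvd hinddvd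
  set F : Fin t → SimpleGraph V :=
    fun i => SimpleGraph.fromEdgeSet ↑((C i).image (fun p => s(p.1, p.2))) with hF
  have hmemF : ∀ i (e : Sym2 V), e ∈ (F i).edgeSet ↔ ∃ p ∈ C i, s(p.1, p.2) = e := by
    intro i e
    rw [hF]
    simp only [SimpleGraph.edgeSet_fromEdgeSet, Set.mem_diff, Finset.coe_image,
      Set.mem_image, Finset.mem_coe, Set.mem_setOf_eq]
    constructor
    · rintro ⟨⟨p, hp, rfl⟩, -⟩
      exact ⟨p, hp, rfl⟩
    · rintro ⟨p, hp, rfl⟩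
      refine ⟨⟨p, hp, rfl⟩, ?_⟩
      rw [Sym2.mem_diagSet, Sym2.isDiag_iff_proj_eq]
      exact hAnd p (hCsub i hp)
  have hedgeK : ∀ p ∈ Af, s(p.1, p.2) ∈ K.edgeSet := by
    intro p hp
    rw [← SimpleGraph.mem_edgeFinset]
    have : s(p.1, p.2) ∈ E := hAmap ▸ Multiset.mem_map_of_mem _ hp
    exact this
  refine ⟨F, ?_, ?_, ?_⟩
  · -- F i ≤ K
    intro i v w hadj
    rw [hF] at hadj
    rw [SimpleGraph.fromEdgeSet_adj] at hadj
    obtain ⟨h1, h2⟩ := hadj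
    simp only [Finset.coe_image, Set.mem_image, Finset.mem_coe] at h1
    obtain ⟨p, hp, hpe⟩ := h1
    have := hedgeK p (hCsub i hp)
    rw [hpe] at this
    exact this
  · -- unique factor for each edge
    intro e he
    have heE : e ∈ E := SimpleGraph.mem_edgeFinset.mpr he
    have : e ∈ A.map (fun p => s(p.1, p.2)) := hAmap ▸ heE
    rw [Multiset.mem_map] at this
    obtain ⟨p₀, hp₀, hp₀e⟩ := this
    have hp₀Af : p₀ ∈ Af := hp₀
    obtain ⟨i₀, hi₀, hi₀u⟩ := hCpart p₀ hp₀Af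
    refine ⟨i₀, ?_, ?_⟩
    · exact (hmemF i₀ e).mpr ⟨p₀, hi₀, hp₀e⟩
    · intro j hj
      obtain ⟨q, hq, hqe⟩ := (hmemF j e).mp hj
      have : q = p₀ := hAinj q (hCsub j hq) p₀ hp₀Af (by rw [hqe, hp₀e])
      subst this
      exact hi₀u j hq
  · -- degrees
    intro i v
    set N : Finset V := ((C i).filter (fun p => p.1 = v)).image (fun p => p.2)
        ∪ ((C i).filter (fun p => p.2 = v)).image (fun p => p.1) with hN
    have hset : (F i).neighborSet v = ↑N := by
      ext w
      simp only [SimpleGraph.mem_neighborSet, Finset.coe_union, Set.mem_union,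
        Finset.coe_image, Set.mem_image, Finset.mem_coe, Finset.mem_filter, hN]
      rw [← SimpleGraph.mem_edgeSet, hmemF]
      constructor
      · rintro ⟨p, hp, hpe⟩
        rw [Sym2.eq_iff] at hpe
        rcases hpe with ⟨h1, h2⟩ | ⟨h1, h2⟩
        · exact Or.inl ⟨p, ⟨hp, h1⟩, h2⟩
        · exact Or.inr ⟨p, ⟨hp, h2⟩, h1⟩
      · rintro (⟨p, ⟨hp, h1⟩, h2⟩ | ⟨p, ⟨hp, h2⟩, h1⟩)
        · exact ⟨p, hp, by rw [h1, h2]⟩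
        · exact ⟨p, hp, by rw [h1, h2]; exact Sym2.eq_swap⟩
    rw [hset, Set.ncard_coe_finset]
    -- disjointness of the two images
    have hdisj : Disjoint (((C i).filter (fun p => p.1 = v)).image (fun p => p.2))
        (((C i).filter (fun p => p.2 = v)).image (fun p => p.1)) := by
      rw [Finset.disjoint_left]
      rintro w hw1 hw2
      rw [Finset.mem_image] at hw1 hw2
      obtain ⟨p, hp, hpe⟩ := hw1
      obtain ⟨q, hq, hqe⟩ := hw2
      rw [Finset.mem_filter] at hp hq
      have hpq : p = q := by
        refine hAinj p (hCsub i hp.1) q (hCsub i hq.1) ?_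
        rw [Sym2.eq_iff]
        right
        constructor
        · rw [hp.2, hq.2]
        · rw [hpe, hqe]
      rw [hpq] at hp
      exact hAnd q (hCsub i hq.1) (hp.2.trans hq.2.symm)
    have hcard : N.card = outd (C i) v + ind (C i) v := by
      rw [hN, Finset.card_union_of_disjoint hdisj, outd, ind]
      congr 1
      · refine Finset.card_image_of_injOn ?_
        intro p hp q hq hpq
        rw [Finset.mem_coe, Finset.mem_filter] at hp hq
        exact Prod.ext (hp.2.trans hq.2.symm) hpq
      · refine Finset.card_image_of_injOn ?_
        intro p hp q hq hpq
        rw [Finset.mem_coe, Finset.mem_filter] at hp hq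
        exact Prod.ext hpq (hp.2.trans hq.2.symm)
    rw [hcard, hCout i v, hCin i v]
    -- arithmetic
    obtain ⟨s, hs⟩ := hdvd v
    have h1 := hdeg2 v
    have h2 := hbal v
    have h3 : outd Af v = t * s := by
      have : 2 * (t * s) = 2 * t * s := by ring
      omega
    have h4 : ind Af v = t * s := by omega
    rw [h3, h4, hs, Nat.mul_div_cancel_left s ht]
    have h5 : 2 * t * s = t * (2 * s) := by ring
    rw [h5, Nat.mul_div_cancel_left (2*s) ht]
    omega
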